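/- Let K and C be convex, relatively solid subsets of a real vector space X (i.e., icr(K) ≠ ∅ and icr(C) ≠ ∅). Then icr(K) + icr(C) = icr(K + C). -/

import Mathlib

open Pointwise

/-- Algebraic interior (core) of a set `A` in a real vector space:
`cor A = {x ∈ A | ∀ d, ∃ δ > 0, ∀ λ ∈ [0, δ], x + λ • d ∈ A}`. -/
def cor {X : Type*} [AddCommGroup X] [Module ℝ X] (A : Set X) : Set X :=
  {x | x ∈ A ∧ ∀ d : X, ∃ δ : ℝ, 0 < δ ∧ ∀ lam ∈ Set.Icc (0 : ℝ) δ, x + lam • d ∈ A}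

/-- Relative algebraic interior of `A`: directions are taken in `L(A) = span (A - A)`. -/
def icr {X : Type*} [AddCommGroup X] [Module ℝ X] (A : Set X) : Set X :=
  {x | x ∈ A ∧ ∀ d ∈ Submodule.span ℝ (A - A),
    ∃ δ : ℝ, 0 < δ ∧ ∀ lam ∈ Set.Icc (0 : ℝ) δ, x + lam • d ∈ A}

/-- Vectorial closure of `A`:
`vcl A = {b | ∃ d, ∀ δ > 0, ∃ λ ∈ [0, δ], b + λ • d ∈ A}`. -/
def vcl {X : Type*} [AddCommGroup X] [Module ℝ X] (A : Set X) : Set X :=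
  {b | ∃ d : X, ∀ δ : ℝ, 0 < δ → ∃ lam ∈ Set.Icc (0 : ℝ) δ, b + lam • d ∈ A}

/-- The core convex topology `τ_c`: the topology whose open sets are the unions of
members of `𝔅 = {A | A convex and cor A = A}`; since `𝔅` is a topological basis
(closed under binary intersection, contains `X` and `∅`), this is the topology
generated by `𝔅`. -/
def tauc (X : Type*) [AddCommGroup X] [Module ℝ X] : TopologicalSpace X :=
  TopologicalSpace.generateFrom {A : Set X | Convex ℝ A ∧ cor A = A}

lemma icr_segment {X : Type*} [AddCommGroup X] [Module ℝ X] {A : Set X}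
    (hA : Convex ℝ A) {a b : X} (ha : a ∈ icr A) (hb : b ∈ A)
    {t : ℝ} (ht : 0 < t) (ht1 : t ≤ 1) : t • a + (1 - t) • b ∈ icr A := by
  constructor
  · exact hA ha.1 hb ht.le (by linarith) (by ring)
  · intro d hd
    obtain ⟨δ, hδ, h⟩ := ha.2 d hd
    refine ⟨t * δ, by positivity, ?_⟩
    rintro lam ⟨h0, h1⟩
    have hmem : a + (lam / t) • d ∈ A := by
      refine h _ ⟨by positivity, ?_⟩
      rw [div_le_iff₀ ht]; linarith [h1, mul_comm t δ]
    have := hA hmem hb (a := t) (b := 1 - t) ht.le (by linarith) (by ring)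
    have heq : t • (a + (lam / t) • d) + (1 - t) • b
        = t • a + (1 - t) • b + lam • d := by
      rw [smul_add, smul_smul, mul_div_cancel₀ _ ht.ne']
      abel
    rwa [heq] at this

/-- For convex, relatively solid sets `K, C` in a real vector space,
`icr K + icr C = icr (K + C)`. -/
theorem stmt1 {X : Type*} [AddCommGroup X] [Module ℝ X] {K C : Set X}
    (hK : Convex ℝ K) (hC : Convex ℝ C)
    (hKs : (icr K).Nonempty) (hCs : (icr C).Nonempty) :
    icr K + icr C = icr (K + C) := by
  obtain ⟨ks, hks⟩ := hKs
  obtain ⟨cs, hcs⟩ := hCs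
  have hspan : Submodule.span ℝ ((K + C) - (K + C))
      = Submodule.span ℝ (K - K) ⊔ Submodule.span ℝ (C - C) := by
    apply le_antisymm
    · rw [Submodule.span_le]
      rintro x ⟨u, hu, v, hv, rfl⟩
      obtain ⟨k1, hk1, c1, hc1, rfl⟩ := hu
      obtain ⟨k2, hk2, c2, hc2, rfl⟩ := hv
      show k1 + c1 - (k2 + c2) ∈ _
      have : k1 + c1 - (k2 + c2) = (k1 - k2) + (c1 - c2) := by abel
      rw [this]
      exact Submodule.add_mem_sup
        (Submodule.subset_span (Set.sub_mem_sub hk1 hk2))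
        (Submodule.subset_span (Set.sub_mem_sub hc1 hc2))
    · apply sup_le <;> rw [Submodule.span_le] <;>
        rintro x ⟨a, ha, b, hb, rfl⟩ <;> apply Submodule.subset_span
      · show a - b ∈ _
        have : a - b = (a + cs) - (b + cs) := by abel
        rw [this]
        exact Set.sub_mem_sub (Set.add_mem_add ha hcs.1) (Set.add_mem_add hb hcs.1)
      · show a - b ∈ _
        have : a - b = (ks + a) - (ks + b) := by abel
        rw [this]
        exact Set.sub_mem_sub (Set.add_mem_add hks.1 ha) (Set.add_mem_add hks.1 hb)
  apply Set.Subset.antisymm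
  · rintro x ⟨k, hk, c, hc, rfl⟩
    constructor
    · exact Set.add_mem_add hk.1 hc.1
    · intro d hd
      rw [hspan] at hd
      obtain ⟨d1, hd1, d2, hd2, rfl⟩ := Submodule.mem_sup.mp hd
      obtain ⟨δ1, hδ1, h1⟩ := hk.2 d1 hd1
      obtain ⟨δ2, hδ2, h2⟩ := hc.2 d2 hd2
      refine ⟨min δ1 δ2, lt_min hδ1 hδ2, ?_⟩
      rintro lam ⟨hl0, hl1⟩
      have : k + c + lam • (d1 + d2) = (k + lam • d1) + (c + lam • d2) := by
        rw [smul_add]; abel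
      rw [this]
      exact Set.add_mem_add
        (h1 lam ⟨hl0, hl1.trans (min_le_left _ _)⟩)
        (h2 lam ⟨hl0, hl1.trans (min_le_right _ _)⟩)
  · intro x hx
    have hd : x - (ks + cs) ∈ Submodule.span ℝ ((K + C) - (K + C)) :=
      Submodule.subset_span (Set.sub_mem_sub hx.1 (Set.add_mem_add hks.1 hcs.1))
    obtain ⟨δ, hδ, h⟩ := hx.2 _ hd
    obtain ⟨k1, hk1, c1, hc1, hy⟩ := h δ ⟨le_rfl.trans hδ.le, le_rfl⟩
    set t : ℝ := δ / (1 + δ) with ht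
    have h1δ : (0 : ℝ) < 1 + δ := by linarith
    have ht0 : 0 < t := by positivity
    have ht1 : t ≤ 1 := by rw [div_le_one h1δ]; linarith
    have hkmem : t • ks + (1 - t) • k1 ∈ icr K := icr_segment hK hks hk1 ht0 ht1
    have hcmem : t • cs + (1 - t) • c1 ∈ icr C := icr_segment hC hcs hc1 ht0 ht1
    refine ⟨_, hkmem, _, hcmem, ?_⟩
    have hy' : k1 + c1 = x + δ • (x - (ks + cs)) := hy
    show (t • ks + (1 - t) • k1) + (t • cs + (1 - t) • c1) = x
    have heq : (t • ks + (1 - t) • k1) + (t • cs + (1 - t) • c1)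
        = t • (ks + cs) + (1 - t) • (k1 + c1) := by
      simp only [smul_add]; abel
    rw [heq, hy', ht]
    match_scalars <;> field_simp <;> ring
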